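/- In the setting of the previous statement, if additionally Γ_{i,j} = gra(∂_{c_{i,j}} f_{i,j}) for each i<j and Γ = ⋂_{i<j} P_{i,j}^{-1}(Γ_{i,j}), then equality c(x_1,...,x_N) = ∑_i u_i(x_i) holds if and only if (x_1,...,x_N) ∈ Γ. -/

import Mathlib

open scoped BigOperators

/-- The `c`-conjugate of `f : X₁ → (-∞,+∞]` with respect to a two-marginal
cost `c : X₁ × X₂ → ℝ`. -/
noncomputable def cConj {X1 X2 : Type*} (c : X1 → X2 → ℝ) (f : X1 → EReal)
    (x2 : X2) : EReal :=
  ⨆ x1, ((c x1 x2 : EReal) - f x1)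

private lemma coe_sum' {ι : Type*} (s : Finset ι) (r : ι → ℝ) :
    ((∑ i ∈ s, r i : ℝ) : EReal) = ∑ i ∈ s, (r i : EReal) :=
  map_sum (⟨⟨Real.toEReal, EReal.coe_zero⟩, EReal.coe_add⟩ : ℝ →+ EReal) r s

private lemma sum_eq_iff' {ι : Type*} [DecidableEq ι] (s : Finset ι) (r : ι → ℝ) (h : ι → EReal)
    (hle : ∀ i ∈ s, (r i : EReal) ≤ h i) :
    (((∑ i ∈ s, r i : ℝ) : EReal) = ∑ i ∈ s, h i) ↔ ∀ i ∈ s, h i = (r i : EReal) := by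
  constructor
  · intro heq a ha
    by_contra hne
    have hlt : (r a : EReal) < h a := lt_of_le_of_ne (hle a ha) (Ne.symm hne)
    have h1 : ((∑ i ∈ s.erase a, r i : ℝ) : EReal) ≤ ∑ i ∈ s.erase a, h i := by
      rw [coe_sum']
      exact Finset.sum_le_sum fun i hi => hle i (Finset.mem_of_mem_erase hi)
    have h2 : (r a : EReal) + ((∑ i ∈ s.erase a, r i : ℝ) : EReal)
        < h a + ∑ i ∈ s.erase a, h i :=
      lt_of_lt_of_le (EReal.add_lt_add_right_coe hlt _) (add_le_add_right h1 _)
    have h3 : ((∑ i ∈ s, r i : ℝ) : EReal) < ∑ i ∈ s, h i := by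
      rw [← Finset.add_sum_erase s r ha, ← Finset.add_sum_erase s h ha, EReal.coe_add]
      exact h2
    exact absurd heq (ne_of_lt h3)
  · intro hall
    rw [coe_sum']
    exact Finset.sum_congr rfl fun i hi => (hall i hi).symm

private lemma le_pair' {X1 X2 : Type*} (c : X1 → X2 → ℝ) (f : X1 → EReal)
    (hbot : ∀ x, f x ≠ ⊥) (hproper : ∃ x, f x ≠ ⊤) (a : X1) (b : X2) :
    (c a b : EReal) ≤ f a + cConj c f b := by
  cases hfa : f a with
  | bot => exact absurd hfa (hbot a)
  | top =>
    have hcb : cConj c f b ≠ ⊥ := by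
      obtain ⟨z, hz⟩ := hproper
      have hle : (c z b : EReal) - f z ≤ cConj c f b :=
        le_iSup (fun x1 => (c x1 b : EReal) - f x1) z
      have hne : (c z b : EReal) - f z ≠ ⊥ := by
        cases hfz : f z with
        | bot => exact absurd hfz (hbot z)
        | top => exact absurd hfz hz
        | coe y => rw [← EReal.coe_sub]; exact EReal.coe_ne_bot _
      exact fun hb => hne (le_bot_iff.mp (hb ▸ hle))
    rw [EReal.top_add_of_ne_bot hcb]
    exact le_top
  | coe y =>
    have hle : (c a b : EReal) - (y : EReal) ≤ cConj c f b :=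
      hfa ▸ le_iSup (fun x1 => (c x1 b : EReal) - f x1) a
    calc (c a b : EReal) = (y : EReal) + ((c a b : EReal) - (y : EReal)) := by
          rw [← EReal.coe_sub, ← EReal.coe_add]; norm_num
      _ ≤ (y : EReal) + cConj c f b := add_le_add_right hle _

theorem equality_iff_mem_of_projections_eq_graphs
    {N : ℕ} (hN : 2 ≤ N) {X : Fin N → Type*} (hne : ∀ i, Nonempty (X i))
    (cij : ∀ i j : Fin N, X i → X j → ℝ)
    (f : ∀ i j : Fin N, X i → EReal) (hfbot : ∀ i j (x : X i), f i j x ≠ ⊥)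
    (hfproper : ∀ i j : Fin N, i < j → ∃ x : X i, f i j x ≠ ⊤)
    (Γ : Set (∀ i, X i)) (hΓne : Γ.Nonempty)
    -- `Γ_{i,j} = gra (∂_{c_{i,j}} f_{i,j})` for each `i < j`:
    (hgraph : ∀ i j : Fin N, i < j → ∀ (a : X i) (b : X j),
      ((a, b) ∈ (fun x : ∀ k, X k => ((x i : X i), (x j : X j))) '' Γ ↔
        f i j a + cConj (cij i j) (f i j) b = (cij i j a b : EReal)))
    -- `Γ = ⋂_{i<j} P_{i,j}⁻¹(Γ_{i,j})`:
    (hinter : ∀ x : ∀ i, X i, x ∈ Γ ↔ ∀ i j : Fin N, i < j →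
      ((x i, x j) ∈ (fun y : ∀ k, X k => ((y i : X i), (y j : X j))) '' Γ)) :
    ∀ x : ∀ i, X i,
      (((∑ i, ∑ j ∈ Finset.Ioi i, cij i j (x i) (x j) : ℝ) : EReal) =
        ∑ i, (∑ j ∈ Finset.Ioi i, f i j (x i) +
              ∑ k ∈ Finset.Iio i, cConj (cij k i) (f k i) (x i))) ↔ x ∈ Γ := by
  intro x
  classical
  -- Rearrange the right-hand side into a sum over pairs i < j
  have hswap : (∑ i, ∑ k ∈ Finset.Iio i, cConj (cij k i) (f k i) (x i))
      = ∑ i, ∑ j ∈ Finset.Ioi i, cConj (cij i j) (f i j) (x j) :=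
    Finset.sum_comm' (fun a b => by simp)
  have hRHS : (∑ i, (∑ j ∈ Finset.Ioi i, f i j (x i) +
        ∑ k ∈ Finset.Iio i, cConj (cij k i) (f k i) (x i)))
      = ∑ i, ∑ j ∈ Finset.Ioi i,
          (f i j (x i) + cConj (cij i j) (f i j) (x j)) := by
    rw [Finset.sum_add_distrib, hswap, ← Finset.sum_add_distrib]
    exact Finset.sum_congr rfl fun i _ => (Finset.sum_add_distrib).symm
  rw [hRHS]
  -- Work with a single sum over the sigma type of pairs
  set S : Finset (Σ _ : Fin N, Fin N) := Finset.univ.sigma (fun i => Finset.Ioi i) with hS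
  have hL : (∑ i, ∑ j ∈ Finset.Ioi i, cij i j (x i) (x j))
      = ∑ p ∈ S, cij p.1 p.2 (x p.1) (x p.2) := Finset.sum_sigma' _ _ _
  have hR : (∑ i, ∑ j ∈ Finset.Ioi i, (f i j (x i) + cConj (cij i j) (f i j) (x j)))
      = ∑ p ∈ S, (f p.1 p.2 (x p.1) + cConj (cij p.1 p.2) (f p.1 p.2) (x p.2)) :=
    Finset.sum_sigma' _ _ _
  rw [hL, hR]
  have hmem : ∀ p : (Σ _ : Fin N, Fin N), p ∈ S → p.1 < p.2 := by
    intro p hp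
    simp only [hS, Finset.mem_sigma, Finset.mem_Ioi] at hp
    exact hp.2
  rw [sum_eq_iff' S _ _ (fun p hp =>
    le_pair' (cij p.1 p.2) (f p.1 p.2) (hfbot p.1 p.2) (hfproper p.1 p.2 (hmem p hp))
      (x p.1) (x p.2))]
  constructor
  · intro hall
    rw [hinter]
    intro i j hij
    exact (hgraph i j hij (x i) (x j)).mpr
      (hall ⟨i, j⟩ (by simp [hS, Finset.mem_sigma, Finset.mem_Ioi, hij]))
  · intro hx p hp
    have hij := hmem p hp
    exact (hgraph p.1 p.2 hij (x p.1) (x p.2)).mp ((hinter x).mp hx p.1 p.2 hij)
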